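/- Let (V,Q) be a quadratic space over ℚ, C⁺(Q) its even Clifford algebra, ι the canonical anti-involution, α ∈ C⁺(Q) with ι(α) = -α, and J ∈ C⁺(Q)_ℝ with ι(J) = -J. Define E(x,y) = Tr(α ι(x) y) and h_s(a+bi)x = x·(a-bJ) (right multiplication) for a² + b² ≠ 0. Then: (1) E(h_s(z)x, h_s(z)y) = (z z̄) E(x,y) for all z ∈ ℂ*, and (2) the form (x,y) ↦ E(x, h_s(i)y) = -Tr(α ι(x) J y) is symmetric, provided J² = -1. -/

import Mathlib

open CliffordAlgebra

noncomputable section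

set_option synthInstance.maxHeartbeats 400000
set_option maxHeartbeats 4000000

variable {V : Type*} [AddCommGroup V] [Module ℝ V]

/-- The trace of left multiplication by `c` on the even Clifford algebra. -/
def Tr11 (Q : QuadraticForm ℝ V) (c : ↥(even Q)) : ℝ :=
  LinearMap.trace ℝ ↥(even Q) (LinearMap.mulLeft ℝ c)

/-- The canonical anti-involution `ι` (Mathlib's `reverse`) on the even Clifford
algebra. -/
def rev11 (Q : QuadraticForm ℝ V) (x : ↥(even Q)) : ↥(even Q) :=
  ⟨reverse (x : CliffordAlgebra Q), (reverse_mem_evenOdd_iff Q).mpr x.2⟩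

/-- The Kuga–Satake form `E(x, y) = Tr(α ι(x) y)` on the even Clifford algebra. -/
def E11 (Q : QuadraticForm ℝ V) (α x y : ↥(even Q)) : ℝ :=
  Tr11 Q (α * rev11 Q x * y)

lemma trace_zero_of_sq_zero {M : Type*} [AddCommGroup M] [Module ℝ M] (f : M →ₗ[ℝ] M)
    (h : f ∘ₗ f = 0) : LinearMap.trace ℝ M f = 0 := by
  by_cases H : ∃ s : Finset M, Nonempty (Module.Basis s ℝ M)
  · obtain ⟨s, ⟨b⟩⟩ := H
    haveI : Module.Finite ℝ M := Module.Finite.of_basis b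
    haveI : Module.Free ℝ M := Module.Free.of_basis b
    exact (LinearMap.isNilpotent_trace_of_isNilpotent
      ⟨2, by rw [pow_two, Module.End.mul_eq_comp, h]⟩).eq_zero
  · rw [LinearMap.trace, dif_neg H, LinearMap.zero_apply]

variable (Q : QuadraticForm ℝ V)

lemma Tr11_add (a b : ↥(even Q)) : Tr11 Q (a + b) = Tr11 Q a + Tr11 Q b := by
  unfold Tr11
  rw [show LinearMap.mulLeft ℝ (a + b) = LinearMap.mulLeft ℝ a + LinearMap.mulLeft ℝ b by
    ext x; simp [add_mul], map_add]

lemma Tr11_smul (s : ℝ) (a : ↥(even Q)) : Tr11 Q (s • a) = s * Tr11 Q a := by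
  unfold Tr11
  rw [show LinearMap.mulLeft ℝ (s • a) = s • LinearMap.mulLeft ℝ a by
    ext x; simp [smul_mul_assoc], map_smul]
  rfl

lemma Tr11_neg (a : ↥(even Q)) : Tr11 Q (-a) = -Tr11 Q a := by
  have := Tr11_smul Q (-1) a
  simpa using this

lemma Tr11_mul_comm (a b : ↥(even Q)) : Tr11 Q (a * b) = Tr11 Q (b * a) := by
  unfold Tr11
  rw [LinearMap.mulLeft_mul, LinearMap.mulLeft_mul, ← Module.End.mul_eq_comp,
    ← Module.End.mul_eq_comp, LinearMap.trace_mul_comm]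

@[simp] lemma rev11_coe (x : ↥(even Q)) :
    ((rev11 Q x : ↥(even Q)) : CliffordAlgebra Q) = reverse (x : CliffordAlgebra Q) := rfl

lemma rev11_mul (x y : ↥(even Q)) : rev11 Q (x * y) = rev11 Q y * rev11 Q x := by
  ext; simp [reverse.map_mul]

lemma rev11_one : rev11 Q (1 : ↥(even Q)) = 1 := by
  ext; simp

lemma rev11_add (x y : ↥(even Q)) : rev11 Q (x + y) = rev11 Q x + rev11 Q y := by
  ext; simp

lemma rev11_smul (s : ℝ) (x : ↥(even Q)) : rev11 Q (s • x) = s • rev11 Q x := by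
  ext; simp

lemma rev11_neg (x : ↥(even Q)) : rev11 Q (-x) = -rev11 Q x := by
  ext; simp

lemma rev11_sub (x y : ↥(even Q)) : rev11 Q (x - y) = rev11 Q x - rev11 Q y := by
  ext; simp [sub_eq_add_neg]

lemma rev11_rev11 (x : ↥(even Q)) : rev11 Q (rev11 Q x) = x := by
  ext; simp [reverse_reverse]

section keydev

variable {n : ℕ} (e : Fin n → V)

/-- Word in the generators. -/
def wp (l : List (Fin n)) : CliffordAlgebra Q :=
  (l.map fun i => ι Q (e i)).prod

lemma wp_nil : wp Q e [] = 1 := rfl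

lemma wp_cons (a : Fin n) (l : List (Fin n)) :
    wp Q e (a :: l) = ι Q (e a) * wp Q e l := by
  simp [wp]

variable {Q e} in
lemma gen_anticomm (horth : ∀ i j : Fin n, i ≠ j → QuadraticMap.polar Q (e i) (e j) = 0)
    {i j : Fin n} (hij : i ≠ j) :
    ι Q (e i) * ι Q (e j) = -(ι Q (e j) * ι Q (e i)) := by
  have h := ι_mul_ι_add_swap (Q := Q) (e i) (e j)
  rw [horth i j hij, map_zero] at h
  exact eq_neg_of_add_eq_zero_left h

variable {Q e} in
lemma wp_move (horth : ∀ i j : Fin n, i ≠ j → QuadraticMap.polar Q (e i) (e j) = 0)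
    (a : Fin n) (t : List (Fin n)) (h : ∀ j ∈ t, j ≠ a) :
    wp Q e t * ι Q (e a) = ((-1 : ℝ)) ^ t.length • (ι Q (e a) * wp Q e t) := by
  induction t with
  | nil => simp [wp]
  | cons b t ih =>
    have hba : b ≠ a := h b (List.mem_cons_self)
    rw [wp_cons, mul_assoc, ih (fun j hj => h j (List.mem_cons_of_mem _ hj)),
      mul_smul_comm, ← mul_assoc, gen_anticomm horth hba]
    rw [List.length_cons, pow_succ, mul_smul]
    simp [mul_assoc]

variable {Q e} in
lemma wp_rev (horth : ∀ i j : Fin n, i ≠ j → QuadraticMap.polar Q (e i) (e j) = 0)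
    (l : List (Fin n)) (hl : l.Nodup) :
    reverse (wp Q e l) = ((-1 : ℝ)) ^ (l.length.choose 2) • wp Q e l := by
  induction l with
  | nil => simp [wp]
  | cons a t ih =>
    have hat : ∀ j ∈ t, j ≠ a := by
      intro j hj
      rintro rfl
      exact (List.nodup_cons.mp hl).1 hj
    rw [wp_cons, reverse.map_mul, reverse_ι, ih (List.nodup_cons.mp hl).2,
      smul_mul_assoc, wp_move horth a t hat, smul_smul]
    rw [List.length_cons, show (t.length + 1).choose 2 = t.length.choose 2 + t.length by
      rw [Nat.choose_succ_succ, Nat.choose_one_right, Nat.add_comm], pow_add]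

variable {Q e} in
lemma wp_insert (horth : ∀ i j : Fin n, i ≠ j → QuadraticMap.polar Q (e i) (e j) = 0)
    (L : List (Fin n)) (hL : L.Pairwise (· < ·)) (a : Fin n) :
    ∃ (r : ℝ) (L' : List (Fin n)), L'.Pairwise (· < ·) ∧ (∀ x ∈ L', x = a ∨ x ∈ L) ∧
      ι Q (e a) * wp Q e L = r • wp Q e L' ∧ L'.length % 2 = (L.length + 1) % 2 := by
  induction L with
  | nil =>
    refine ⟨1, [a], List.pairwise_singleton _ a, by simp, by simp [wp], rfl⟩
  | cons b L₁ ih =>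
    have hb : ∀ x ∈ L₁, b < x := (List.pairwise_cons.mp hL).1
    have hL₁ : L₁.Pairwise (· < ·) := (List.pairwise_cons.mp hL).2
    rcases lt_trichotomy a b with hab | hab | hab
    · refine ⟨1, a :: b :: L₁, ?_, ?_, by rw [one_smul, wp_cons Q e a (b :: L₁)], by simp⟩
      · refine List.pairwise_cons.mpr ⟨?_, hL⟩
        intro x hx
        rcases List.mem_cons.mp hx with rfl | hx'
        · exact hab
        · exact lt_trans hab (hb x hx')
      · intro x hx
        rcases List.mem_cons.mp hx with rfl | hx'
        · exact Or.inl rfl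
        · exact Or.inr hx'
    · subst hab
      refine ⟨Q (e a), L₁, hL₁, fun x hx => Or.inr (List.mem_cons_of_mem _ hx), ?_, ?_⟩
      · rw [wp_cons, ← mul_assoc, ι_sq_scalar, ← Algebra.smul_def]
      · simp only [List.length_cons]
        omega
    · obtain ⟨r, L₂, hL₂sort, hL₂mem, hL₂eq, hL₂len⟩ := ih hL₁
      refine ⟨-r, b :: L₂, ?_, ?_, ?_, ?_⟩
      · refine List.pairwise_cons.mpr ⟨?_, hL₂sort⟩
        intro x hx
        rcases hL₂mem x hx with rfl | hx'
        · exact hab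
        · exact hb x hx'
      · intro x hx
        rcases List.mem_cons.mp hx with rfl | hx'
        · exact Or.inr (List.mem_cons_self)
        · rcases hL₂mem x hx' with rfl | h''
          · exact Or.inl rfl
          · exact Or.inr (List.mem_cons_of_mem _ h'')
      · rw [wp_cons, ← mul_assoc, gen_anticomm horth (ne_of_gt hab), neg_mul, mul_assoc,
          hL₂eq, wp_cons Q e b L₂, mul_smul_comm, neg_smul]
      · simp only [List.length_cons]
        omega

variable {Q e} in
lemma wp_norm (horth : ∀ i j : Fin n, i ≠ j → QuadraticMap.polar Q (e i) (e j) = 0)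
    (l : List (Fin n)) :
    ∃ (r : ℝ) (L : List (Fin n)), L.Pairwise (· < ·) ∧ wp Q e l = r • wp Q e L ∧
      L.length % 2 = l.length % 2 := by
  induction l with
  | nil => exact ⟨1, [], List.Pairwise.nil, by simp, rfl⟩
  | cons a t ih =>
    obtain ⟨r, L, hsort, heq, hlen⟩ := ih
    obtain ⟨r', L', hsort', _, heq', hlen'⟩ := wp_insert horth L hsort a
    refine ⟨r * r', L', hsort', ?_, by simp only [List.length_cons]; omega⟩
    rw [wp_cons, heq, mul_smul_comm, heq', smul_smul]

lemma wp_mem_even : ∀ (l : List (Fin n)), l.length % 2 = 0 → wp Q e l ∈ evenOdd Q 0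
  | [], _ => by
    rw [wp_nil]
    exact one_le_evenOdd_zero Q (Submodule.mem_one.mpr ⟨1, map_one _⟩)
  | [a], h => by simp at h
  | a :: b :: t, h => by
    have ht : wp Q e t ∈ evenOdd Q 0 := wp_mem_even t (by simp only [List.length_cons] at h; omega)
    have h2 : ι Q (e a) * ι Q (e b) * wp Q e t ∈ evenOdd Q (0 + 0) :=
      SetLike.mul_mem_graded (ι_mul_ι_mem_evenOdd_zero Q (e a) (e b)) ht
    rw [wp_cons, wp_cons, ← mul_assoc]
    simpa using h2

lemma wp_involute (l : List (Fin n)) :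
    involute (wp Q e l) = ((-1 : ℝ)) ^ l.length • wp Q e l := by
  induction l with
  | nil => simp [wp]
  | cons a t ih =>
    rw [wp_cons, map_mul, involute_ι, ih, List.length_cons, pow_succ, mul_smul]
    simp [mul_smul, mul_smul_comm, neg_mul]


variable {Q e} in
lemma monotrace (horth : ∀ i j : Fin n, i ≠ j → QuadraticMap.polar Q (e i) (e j) = 0)
    (a : Fin n) (t : List (Fin n)) (hne : t ≠ [])
    (hsort : (a :: t).Pairwise (· < ·)) (hlen : (a :: t).length % 2 = 0)
    (z : ↥(even Q)) (hz : (z : CliffordAlgebra Q) = wp Q e (a :: t)) :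
    Tr11 Q z = 0 := by
  have hat : ∀ j ∈ t, j ≠ a := fun j hj => ne_of_gt ((List.pairwise_cons.mp hsort).1 j hj)
  have htodd : (-1 : ℝ) ^ t.length = -1 := by
    have ht1 : t.length % 2 = 1 := by simp only [List.length_cons] at hlen; omega
    exact Odd.neg_one_pow (Nat.odd_iff.mpr ht1)
  have hmove : wp Q e t * ι Q (e a) = -(ι Q (e a) * wp Q e t) := by
    rw [wp_move horth a t hat, htodd, neg_one_smul]
  have claim1 : wp Q e (a :: t) * ι Q (e a) = -(ι Q (e a) * wp Q e (a :: t)) := by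
    rw [wp_cons, mul_assoc, hmove, mul_neg, ← mul_assoc]
  by_cases hq : Q (e a) = 0
  · -- nilpotent case
    have hmm : wp Q e (a :: t) * wp Q e (a :: t) = 0 := by
      have h1 : wp Q e (a :: t) * wp Q e (a :: t)
          = (wp Q e (a :: t) * ι Q (e a)) * wp Q e t := by
        rw [mul_assoc, ← wp_cons]
      rw [h1, claim1, wp_cons, neg_mul]
      simp only [← mul_assoc]
      rw [ι_sq_scalar, hq, map_zero, zero_mul, zero_mul, neg_zero]
    have hzz : z * z = 0 := by
      ext
      rw [MulMemClass.coe_mul, hz, hmm]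
      rfl
    have hsq : LinearMap.mulLeft ℝ z ∘ₗ LinearMap.mulLeft ℝ z = 0 := by
      ext w
      simp only [LinearMap.comp_apply, LinearMap.mulLeft_apply, LinearMap.zero_apply,
        ← mul_assoc, hzz, zero_mul]
    exact trace_zero_of_sq_zero _ hsq
  · -- conjugation case
    have hmem : ∀ w : ↥(even Q),
        ι Q (e a) * (w : CliffordAlgebra Q) * ι Q (e a) ∈ evenOdd Q 0 := by
      intro w
      have h1 := SetLike.mul_mem_graded
        (SetLike.mul_mem_graded (ι_mem_evenOdd_one Q (e a)) w.2) (ι_mem_evenOdd_one Q (e a))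
      have h2 : ((1 : ZMod 2) + 0 + 1) = 0 := by decide
      rwa [h2] at h1
    set g : ↥(even Q) →ₗ[ℝ] ↥(even Q) :=
      { toFun := fun w => ⟨ι Q (e a) * (w : CliffordAlgebra Q) * ι Q (e a), hmem w⟩
        map_add' := by
          intro w₁ w₂
          ext
          simp [mul_add, add_mul]
        map_smul' := by
          intro s w
          ext
          simp [mul_smul_comm, smul_mul_assoc] } with hg
    have hga : ∀ w : ↥(even Q), g (z * w) = -(z * g w) := by
      intro w
      ext
      show ι Q (e a) * ((z : CliffordAlgebra Q) * w) * ι Q (e a)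
          = -((z : CliffordAlgebra Q) * (ι Q (e a) * w * ι Q (e a)))
      have h1 : ι Q (e a) * (z : CliffordAlgebra Q) = -((z : CliffordAlgebra Q) * ι Q (e a)) := by
        rw [hz, claim1, neg_neg]
      rw [← mul_assoc, h1]
      simp only [neg_mul, mul_assoc]
    have hcomp : ∀ w : ↥(even Q), g (g w) = (Q (e a) * Q (e a)) • w := by
      intro w
      ext
      show ι Q (e a) * (ι Q (e a) * (w : CliffordAlgebra Q) * ι Q (e a)) * ι Q (e a)
          = (Q (e a) * Q (e a)) • (w : CliffordAlgebra Q)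
      simp only [← mul_assoc]
      rw [ι_sq_scalar, mul_assoc (algebraMap ℝ _ (Q (e a)) * (w : CliffordAlgebra Q)),
        ι_sq_scalar, ← Algebra.commutes (Q (e a)), ← mul_assoc, ← map_mul, ← Algebra.smul_def]
    set c : ℝ := (Q (e a))⁻¹ * (Q (e a))⁻¹ with hc
    have hgg : ∀ w : ↥(even Q), g (c • g w) = w := by
      intro w
      rw [map_smul, hcomp, smul_smul, hc]
      field_simp
      rw [one_smul]
    have hgg' : ∀ w : ↥(even Q), c • g (g w) = w := by
      intro w
      rw [hcomp, smul_smul, hc]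
      field_simp
      rw [one_smul]
    set Ψ : ↥(even Q) ≃ₗ[ℝ] ↥(even Q) :=
      LinearEquiv.ofLinear g (c • g) (by ext w; exact congrArg Subtype.val (hgg w))
        (by ext w; exact congrArg Subtype.val (hgg' w)) with hΨ
    have hconj : Ψ.conj (LinearMap.mulLeft ℝ z) = -(LinearMap.mulLeft ℝ z) := by
      ext w
      have h1 : Ψ.conj (LinearMap.mulLeft ℝ z) w = Ψ (z * Ψ.symm w) := by
        simp [LinearEquiv.conj_apply]
      rw [h1]
      have h2 : Ψ (z * Ψ.symm w) = -(z * Ψ (Ψ.symm w)) := hga (Ψ.symm w)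
      rw [h2, LinearEquiv.apply_symm_apply]
      rfl
    have htr := LinearMap.trace_conj' (LinearMap.mulLeft ℝ z) Ψ
    rw [hconj, map_neg] at htr
    have : Tr11 Q z = -Tr11 Q z := by
      unfold Tr11
      linarith [htr]
    linarith [this]


end keydev

/-- THE key lemma: the trace is invariant under reversal. -/
lemma keyLemma (c : ↥(even Q)) : Tr11 Q (rev11 Q c) = Tr11 Q c := by
  classical
  -- Step 1: a finite-dimensional subspace generating `c`
  have step1 : ∀ x : CliffordAlgebra Q, ∃ W : Submodule ℝ V, FiniteDimensional ℝ W ∧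
      x ∈ Algebra.adjoin ℝ (ι Q '' (W : Set V)) := by
    intro x
    induction x using CliffordAlgebra.induction with
    | algebraMap r => exact ⟨⊥, inferInstance, Subalgebra.algebraMap_mem _ r⟩
    | ι x => exact ⟨Submodule.span ℝ {x}, inferInstance,
        Algebra.subset_adjoin ⟨x, Submodule.mem_span_singleton_self x, rfl⟩⟩
    | mul a b ha hb =>
      obtain ⟨W₁, h₁, ha⟩ := ha
      obtain ⟨W₂, h₂, hb⟩ := hb
      refine ⟨W₁ ⊔ W₂, inferInstance, mul_mem ?_ ?_⟩
      · exact Algebra.adjoin_mono (Set.image_mono (SetLike.coe_subset_coe.mpr le_sup_left)) ha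
      · exact Algebra.adjoin_mono (Set.image_mono (SetLike.coe_subset_coe.mpr le_sup_right)) hb
    | add a b ha hb =>
      obtain ⟨W₁, h₁, ha⟩ := ha
      obtain ⟨W₂, h₂, hb⟩ := hb
      refine ⟨W₁ ⊔ W₂, inferInstance, add_mem ?_ ?_⟩
      · exact Algebra.adjoin_mono (Set.image_mono (SetLike.coe_subset_coe.mpr le_sup_left)) ha
      · exact Algebra.adjoin_mono (Set.image_mono (SetLike.coe_subset_coe.mpr le_sup_right)) hb
  obtain ⟨W, hWfd, hc⟩ := step1 (c : CliffordAlgebra Q)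
  haveI := hWfd
  haveI : Invertible (2 : ℝ) := invertibleOfNonzero two_ne_zero
  -- Step 2: an orthogonal basis of W
  set B : LinearMap.BilinForm ℝ W :=
    (QuadraticMap.polarBilin Q).compl₁₂ W.subtype W.subtype with hB
  have hBsymm : LinearMap.IsSymm B := by
    refine ⟨fun x y => ?_⟩
    simp only [hB, LinearMap.compl₁₂_apply, QuadraticMap.polarBilin_apply_apply,
      RingHom.id_apply, Submodule.subtype_apply]
    exact QuadraticMap.polar_comm _ _ _
  obtain ⟨v, hv⟩ := LinearMap.BilinForm.exists_orthogonal_basis hBsymm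
  set e : Fin (Module.finrank ℝ W) → V := fun i => ((v i : W) : V) with he
  have horth : ∀ i j, i ≠ j → QuadraticMap.polar Q (e i) (e j) = 0 := by
    intro i j hij
    have h1 : B (v i) (v j) = 0 := hv hij
    simpa only [hB, LinearMap.compl₁₂_apply, QuadraticMap.polarBilin_apply_apply,
      Submodule.subtype_apply] using h1
  -- Step 3: `c` lies in the algebra generated by the orthogonal family
  have hWspan : ∀ w : V, w ∈ W → w ∈ Submodule.span ℝ (Set.range e) := by
    intro w hw
    have h1 : (⟨w, hw⟩ : W) ∈ Submodule.span ℝ (Set.range v) := by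
      rw [Module.Basis.span_eq]; trivial
    have h2 := Submodule.mem_map_of_mem (f := W.subtype) h1
    rw [Submodule.map_span, ← Set.range_comp] at h2
    exact h2
  have hc2 : (c : CliffordAlgebra Q) ∈
      Algebra.adjoin ℝ (Set.range fun i => ι Q (e i)) := by
    refine Algebra.adjoin_le ?_ hc
    rintro _ ⟨w, hw, rfl⟩
    have h1 : ι Q w ∈ Submodule.map (ι Q) (Submodule.span ℝ (Set.range e)) :=
      Submodule.mem_map_of_mem (hWspan w hw)
    rw [Submodule.map_span, ← Set.range_comp] at h1
    have h2 : Submodule.span ℝ (Set.range (ι Q ∘ e)) ≤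
        Subalgebra.toSubmodule (Algebra.adjoin ℝ (Set.range fun i => ι Q (e i))) :=
      Submodule.span_le.mpr (fun z hz => Algebra.subset_adjoin hz)
    exact h2 h1
  -- Step 4: `c` is in the span of the words
  have hword : ∀ x ∈ Submonoid.closure (Set.range fun i => ι Q (e i)),
      ∃ l : List (Fin (Module.finrank ℝ W)), x = wp Q e l := by
    have hlistword : ∀ L : List (CliffordAlgebra Q),
        (∀ y ∈ L, y ∈ Set.range fun i => ι Q (e i)) → ∃ l, L.prod = wp Q e l := by
      intro L
      induction L with
      | nil => exact fun _ => ⟨[], rfl⟩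
      | cons y L ih =>
        intro hmem
        obtain ⟨l, hl⟩ := ih (fun z hz => hmem z (List.mem_cons_of_mem _ hz))
        obtain ⟨i, hi⟩ := hmem y (List.mem_cons_self)
        exact ⟨i :: l, by rw [List.prod_cons, hl, wp_cons, ← hi]⟩
    intro x hx
    obtain ⟨L, hLmem, rfl⟩ := Submonoid.exists_list_of_mem_closure hx
    exact hlistword L hLmem
  have hc3 : (c : CliffordAlgebra Q) ∈
      Submodule.span ℝ {z | ∃ l, z = wp Q e l} := by
    have h1 : (c : CliffordAlgebra Q) ∈
        Subalgebra.toSubmodule (Algebra.adjoin ℝ (Set.range fun i => ι Q (e i))) := hc2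
    rw [Algebra.adjoin_eq_span] at h1
    exact Submodule.span_mono (fun x hx => hword x hx) h1
  -- Step 5: reduce to sorted words
  have hc4 : (c : CliffordAlgebra Q) ∈
      Submodule.span ℝ {z | ∃ L, L.Pairwise (· < ·) ∧ z = wp Q e L} := by
    refine Submodule.span_le.mpr ?_ hc3
    rintro x ⟨l, rfl⟩
    obtain ⟨r, L, hs, heq, _⟩ := wp_norm horth l
    rw [heq]
    exact Submodule.smul_mem _ r (Submodule.subset_span ⟨L, hs, rfl⟩)
  -- Step 6: reduce to even-length sorted words
  set P : CliffordAlgebra Q →ₗ[ℝ] CliffordAlgebra Q :=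
    (1/2 : ℝ) • (LinearMap.id + involute.toLinearMap) with hP
  have hPc : P (c : CliffordAlgebra Q) = (c : CliffordAlgebra Q) := by
    rw [hP]
    simp only [LinearMap.smul_apply, LinearMap.add_apply, LinearMap.id_apply,
      AlgHom.toLinearMap_apply, involute_eq_of_mem_even c.2]
    rw [← two_smul ℝ (c : CliffordAlgebra Q), smul_smul]
    norm_num
  have hc5 : (c : CliffordAlgebra Q) ∈
      Submodule.span ℝ {z | ∃ L, L.Pairwise (· < ·) ∧ L.length % 2 = 0 ∧ z = wp Q e L} := by
    rw [← hPc]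
    have h6 := Submodule.mem_map_of_mem (f := P) hc4
    rw [Submodule.map_span] at h6
    refine Submodule.span_le.mpr ?_ h6
    rintro _ ⟨y, ⟨L, hs, rfl⟩, rfl⟩
    rcases Nat.even_or_odd L.length with hev | hod
    · have hPw : P (wp Q e L) = wp Q e L := by
        rw [hP]
        simp only [LinearMap.smul_apply, LinearMap.add_apply, LinearMap.id_apply,
          AlgHom.toLinearMap_apply, wp_involute, hev.neg_one_pow, one_smul]
        rw [← two_smul ℝ (wp Q e L), smul_smul]
        norm_num
      rw [hPw]
      exact Submodule.subset_span ⟨L, hs, Nat.even_iff.mp hev, rfl⟩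
    · have hPw : P (wp Q e L) = 0 := by
        rw [hP]
        simp only [LinearMap.smul_apply, LinearMap.add_apply, LinearMap.id_apply,
          AlgHom.toLinearMap_apply, wp_involute, hod.neg_one_pow, neg_one_smul,
          add_neg_cancel, smul_zero]
      rw [hPw]
      exact Submodule.zero_mem _
  -- Step 7: lift to the even subalgebra
  set T : Set ↥(even Q) :=
    {w | ∃ L, L.Pairwise (· < ·) ∧ L.length % 2 = 0 ∧
      (w : CliffordAlgebra Q) = wp Q e L} with hT
  have hc6 : c ∈ Submodule.span ℝ T := by
    have hsub : {z | ∃ L, List.Pairwise (· < ·) L ∧ L.length % 2 = 0 ∧ z = wp Q e L}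
        ⊆ ((even Q).val.toLinearMap : ↥(even Q) →ₗ[ℝ] CliffordAlgebra Q) '' T := by
      rintro z ⟨L, hs, hl, rfl⟩
      exact ⟨⟨wp Q e L, wp_mem_even Q e L hl⟩, ⟨L, hs, hl, rfl⟩, rfl⟩
    have h7 := Submodule.span_mono hsub hc5
    rw [← Submodule.map_span] at h7
    obtain ⟨d, hd, hdc⟩ := h7
    have hdc' : d = c := Subtype.val_injective hdc
    rwa [hdc'] at hd
  -- Step 8: the property holds on `T` and is preserved by span operations
  have hprop : ∀ w ∈ T, Tr11 Q (rev11 Q w) = Tr11 Q w := by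
    rintro w ⟨L, hs, hl, hw⟩
    match L, hs, hl, hw with
    | [], _, _, hw =>
      have hw1 : w = 1 := Subtype.ext (by rw [hw]; rfl)
      rw [hw1, rev11_one]
    | a :: t, hs, hl, hw =>
      have hne : t ≠ [] := by
        rintro rfl
        simp at hl
      have hTr : Tr11 Q w = 0 := monotrace horth a t hne hs hl w hw
      have hnodup : (a :: t).Nodup := hs.imp (fun h => ne_of_lt h)
      have hrev : rev11 Q w = ((-1 : ℝ)) ^ ((a :: t).length.choose 2) • w := by
        ext
        rw [rev11_coe, hw, wp_rev horth _ hnodup]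
        rw [SetLike.val_smul, hw]
      rw [hrev, Tr11_smul, hTr, mul_zero]
  clear hc hc2 hc3 hc4 hc5 hPc hword hWspan
  induction hc6 using Submodule.span_induction with
  | mem w hw => exact hprop w hw
  | zero =>
    rw [show rev11 Q 0 = 0 from Subtype.ext (by simp)]
  | add x y hx hy ihx ihy =>
    rw [rev11_add, Tr11_add, Tr11_add, ihx, ihy]
  | smul r x hx ih =>
    rw [rev11_smul, Tr11_smul, Tr11_smul, ih]


theorem stmt_11 (Q : QuadraticForm ℝ V) (α J : ↥(even Q))
    (hα : rev11 Q α = -α) (hJ : rev11 Q J = -J) (hJ2 : J * J = -1) :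
    (∀ a b : ℝ, a ^ 2 + b ^ 2 ≠ 0 → ∀ x y : ↥(even Q),
      E11 Q α ((a • (1 : ↥(even Q)) - b • J) * x) ((a • (1 : ↥(even Q)) - b • J) * y) =
        (a ^ 2 + b ^ 2) * E11 Q α x y) ∧
    (∀ x y : ↥(even Q), E11 Q α x (-(J * y)) = E11 Q α y (-(J * x))) := by
  constructor
  · intro a b _hab x y
    have hrev : rev11 Q (a • (1 : ↥(even Q)) - b • J) = a • (1 : ↥(even Q)) + b • J := by
      rw [rev11_sub, rev11_smul, rev11_smul, rev11_one, hJ, smul_neg, sub_neg_eq_add]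
    have hkey : (a • (1 : ↥(even Q)) + b • J) * (a • (1 : ↥(even Q)) - b • J)
        = (a ^ 2 + b ^ 2) • (1 : ↥(even Q)) := by
      rw [mul_sub, add_mul, add_mul]
      simp only [smul_mul_assoc, mul_smul_comm, one_mul, mul_one, hJ2]
      rw [add_smul]
      module
    unfold E11
    rw [rev11_mul, hrev]
    have step : α * (rev11 Q x * (a • (1 : ↥(even Q)) + b • J)) *
        ((a • (1 : ↥(even Q)) - b • J) * y) = (a ^ 2 + b ^ 2) • (α * rev11 Q x * y) := by
      rw [← mul_assoc α, mul_assoc (α * rev11 Q x), ← mul_assoc (a • (1 : ↥(even Q)) + b • J),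
        hkey, smul_mul_assoc, one_mul, mul_smul_comm]
    rw [step, Tr11_smul]
  · intro x y
    have h1 : E11 Q α x (-(J * y)) = Tr11 Q (rev11 Q (α * rev11 Q x * -(J * y))) :=
      (keyLemma Q _).symm
    rw [h1]
    have h2 : rev11 Q (α * rev11 Q x * -(J * y)) =
        -(rev11 Q y * J * (x * α)) := by
      simp only [rev11_mul, rev11_neg, rev11_rev11, hα, hJ, mul_neg, neg_mul, neg_neg,
        mul_assoc]
    rw [h2, Tr11_neg]
    have e1 : rev11 Q y * J * (x * α) = (rev11 Q y * J * x) * α := by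
      simp only [mul_assoc]
    have e2 : α * (rev11 Q y * J * x) = α * rev11 Q y * (J * x) := by
      simp only [mul_assoc]
    have h3 : Tr11 Q (rev11 Q y * J * (x * α)) = Tr11 Q (α * rev11 Q y * (J * x)) := by
      rw [e1, Tr11_mul_comm, e2]
    rw [h3]
    unfold E11
    rw [mul_neg, Tr11_neg]


end
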